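/- DFMRF is a 2-approximation under 1-nearest-neighbor dependency: for any finite point set v_n ⊂ ℝ² in general position, the energy of the DFMRF policy satisfies E(DFMRF(v_n)) ≤ 2 E(π*(v_n)), where π* is the minimum-energy lossless fusion policy. This follows from: (a) the sum of ν-power-weighted edges of the 1-nearest-neighbor graph on v_n is at most the sum of ν-power-weighted edges of the Euclidean MST on v_n, and (b) the MST energy lower-bounds the optimal policy energy. -/

import Mathlib

open scoped Classical

noncomputable def sym2Dist {ι : Type*} (p : ι → EuclideanSpace ℝ (Fin 2)) (ν : ℝ) :
    Sym2 ι → ℝ :=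
  Sym2.lift ⟨fun a b => dist (p a) (p b) ^ ν, fun a b => by simp [dist_comm]⟩

noncomputable def graphEnergy {ι : Type*} [Fintype ι]
    (p : ι → EuclideanSpace ℝ (Fin 2)) (ν : ℝ) (G : SimpleGraph ι) : ℝ :=
  ∑ e ∈ Finset.univ.filter (fun e : Sym2 ι => e ∈ G.edgeSet), sym2Dist p ν e

/-- The Euclidean 1-nearest-neighbor graph: an edge between `i` and `j` whenever `j` is the
nearest neighbor of `i` or vice versa. -/
def nng {ι : Type*} (p : ι → EuclideanSpace ℝ (Fin 2)) : SimpleGraph ι :=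
  SimpleGraph.fromRel (fun i j =>
    ∀ l : ι, l ≠ i → dist (p i) (p j) ≤ dist (p i) (p l))

def policyGraph {ι : Type*} (D : Multiset (ι × ι)) : SimpleGraph ι :=
  SimpleGraph.fromRel (fun i j => (i, j) ∈ D)

noncomputable def policyCost {ι : Type*} (p : ι → EuclideanSpace ℝ (Fin 2)) (ν : ℝ)
    (D : Multiset (ι × ι)) : ℝ :=
  (D.map (fun e => dist (p e.1) (p e.2) ^ ν)).sum

/-- Minimum energy over all lossless fusion policies, i.e. over all multisets of directed
transmissions whose undirected support graph is connected. -/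
noncomputable def optEnergy {ι : Type*} (p : ι → EuclideanSpace ℝ (Fin 2)) (ν : ℝ) : ℝ :=
  sInf {c : ℝ | ∃ D : Multiset (ι × ι), (policyGraph D).Connected ∧ c = policyCost p ν D}

-- helpers

lemma aux_connected_of_reach {ι : Type} {G H : SimpleGraph ι} (hG : G.Connected)
    (h : ∀ a b, G.Adj a b → H.Reachable a b) : H.Connected := by
  have key : ∀ {u v : ι}, G.Walk u v → H.Reachable u v := by
    intro u v w
    induction w with
    | nil => exact SimpleGraph.Reachable.refl _
    | cons h' _ ih => exact (h _ _ h').trans ih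
  haveI : Nonempty ι := hG.nonempty
  exact ⟨fun u v => key (hG.preconnected u v).some⟩

lemma aux_exists_spanning_tree {ι : Type} [Fintype ι] :
    ∀ (n : ℕ) (G : SimpleGraph ι), G.edgeSet.ncard ≤ n → G.Connected →
      ∃ T : SimpleGraph ι, T.IsTree ∧ T ≤ G := by
  intro n
  induction n with
  | zero =>
    intro G hcard hconn
    by_cases hac : G.IsAcyclic
    · exact ⟨G, ⟨hconn, hac⟩, le_rfl⟩
    · exfalso
      simp only [SimpleGraph.IsAcyclic, not_forall, not_not] at hac
      obtain ⟨v, c, hc⟩ := hac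
      cases c with
      | nil => exact hc.ne_nil rfl
      | cons ha q =>
        have hmem : s(v, _) ∈ G.edgeSet := ha
        have : 0 < G.edgeSet.ncard := (Set.ncard_pos (G.edgeSet.toFinite)).2 ⟨_, hmem⟩
        omega
  | succ n ih =>
    intro G hcard hconn
    by_cases hac : G.IsAcyclic
    · exact ⟨G, ⟨hconn, hac⟩, le_rfl⟩
    · simp only [SimpleGraph.IsAcyclic, not_forall, not_not] at hac
      obtain ⟨v, c, hc⟩ := hac
      cases c with
      | nil => exact absurd rfl hc.ne_nil
      | @cons _ w _ ha q =>
        set G' := G \ SimpleGraph.fromEdgeSet {s(v, w)} with hG'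
        have hreach : G'.Reachable v w :=
          (SimpleGraph.adj_and_reachable_delete_edges_iff_exists_cycle.mpr
            ⟨v, SimpleGraph.Walk.cons ha q, hc, by simp⟩).2
        have hE' : G'.edgeSet = G.edgeSet \ {s(v, w)} := by
          simp [hG', SimpleGraph.edgeSet_sdiff, SimpleGraph.edgeSet_fromEdgeSet,
            SimpleGraph.edgeSet_sdiff_sdiff_isDiag]
        have hconn' : G'.Connected := by
          apply aux_connected_of_reach hconn
          intro a b hab
          by_cases hcase : s(a, b) = s(v, w)
          · rw [Sym2.eq_iff] at hcase
            rcases hcase with ⟨rfl, rfl⟩ | ⟨rfl, rfl⟩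
            · exact hreach
            · exact hreach.symm
          · refine SimpleGraph.Adj.reachable ?_
            rw [SimpleGraph.sdiff_adj]
            refine ⟨hab, fun hadj => hcase ?_⟩
            simpa using hadj.1
        have hcard' : G'.edgeSet.ncard ≤ n := by
          rw [hE']
          have hmem : s(v, w) ∈ G.edgeSet := ha
          have := Set.ncard_diff_singleton_lt_of_mem hmem (G.edgeSet.toFinite)
          omega
        obtain ⟨T, hT, hle⟩ := ih G' hcard' hconn'
        exact ⟨T, hT, hle.trans sdiff_le⟩

lemma sym2Dist_nonneg {ι : Type} (p : ι → EuclideanSpace ℝ (Fin 2)) (ν : ℝ)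
    (e : Sym2 ι) : 0 ≤ sym2Dist p ν e := by
  induction e using Sym2.ind with
  | _ a b => exact Real.rpow_nonneg dist_nonneg ν

lemma graphEnergy_eq {ι : Type} [Fintype ι] (p : ι → EuclideanSpace ℝ (Fin 2)) (ν : ℝ)
    (G : SimpleGraph ι) [Fintype G.edgeSet] :
    graphEnergy p ν G = ∑ e ∈ G.edgeSet.toFinset, sym2Dist p ν e :=
  Finset.sum_congr (by ext e; simp) (fun _ _ => rfl)

lemma graphEnergy_mono {ι : Type} [Fintype ι] (p : ι → EuclideanSpace ℝ (Fin 2)) (ν : ℝ)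
    {G H : SimpleGraph ι} (h : G ≤ H) : graphEnergy p ν G ≤ graphEnergy p ν H := by
  rw [graphEnergy_eq, graphEnergy_eq]
  apply Finset.sum_le_sum_of_subset_of_nonneg
  · intro e he
    simp only [Set.mem_toFinset] at he ⊢
    exact SimpleGraph.edgeSet_mono h he
  · exact fun e _ _ => sym2Dist_nonneg p ν e

lemma graphEnergy_le_policyCost {ι : Type} [Fintype ι] [Nonempty ι]
    (p : ι → EuclideanSpace ℝ (Fin 2)) (ν : ℝ) (D : Multiset (ι × ι)) :
    graphEnergy p ν (policyGraph D) ≤ policyCost p ν D := by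
  set w' : ι × ι → ℝ := fun x => dist (p x.1) (p x.2) ^ ν with hw'def
  have hw' : ∀ x : ι × ι, 0 ≤ w' x := fun x => Real.rpow_nonneg dist_nonneg ν
  have h1 : ∑ x ∈ D.toFinset, w' x ≤ policyCost p ν D := by
    rw [policyCost, Finset.sum_multiset_map_count]
    apply Finset.sum_le_sum
    intro x hx
    have hc : 1 ≤ D.count x := Multiset.one_le_count_iff_mem.2 (Multiset.mem_toFinset.1 hx)
    rw [nsmul_eq_mul]
    calc w' x = 1 * w' x := (one_mul _).symm
      _ ≤ (D.count x : ℝ) * w' x := by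
          apply mul_le_mul_of_nonneg_right _ (hw' x)
          exact_mod_cast hc
  refine le_trans ?_ h1
  rw [graphEnergy_eq]
  have hex : ∀ e ∈ (policyGraph D).edgeSet.toFinset, ∃ x : ι × ι, x ∈ D ∧ Sym2.mk x.1 x.2 = e := by
    intro e
    induction e using Sym2.ind with
    | _ a b =>
      intro he
      rw [Set.mem_toFinset] at he
      simp only [Set.mem_toFinset, SimpleGraph.mem_edgeSet, policyGraph,
        SimpleGraph.fromRel_adj] at he
      rcases he.2 with h | h
      · exact ⟨(a, b), h, rfl⟩
      · exact ⟨(b, a), h, Sym2.eq_swap⟩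
  set g : Sym2 ι → ι × ι := fun e =>
    if h : ∃ x : ι × ι, x ∈ D ∧ Sym2.mk x.1 x.2 = e then h.choose else Classical.arbitrary _ with hgdef
  have hg : ∀ e ∈ (policyGraph D).edgeSet.toFinset, g e ∈ D ∧ Sym2.mk (g e).1 (g e).2 = e := by
    intro e he
    have h := hex e he
    simp only [hgdef, dif_pos h]
    exact h.choose_spec
  have hsum : ∑ e ∈ (policyGraph D).edgeSet.toFinset, sym2Dist p ν e
      = ∑ e ∈ (policyGraph D).edgeSet.toFinset, w' (g e) := by
    apply Finset.sum_congr rfl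
    intro e he
    have hmk : ∀ x : ι × ι, sym2Dist p ν (Sym2.mk x.1 x.2) = w' x := fun x => by
      obtain ⟨a, b⟩ := x; rfl
    rw [← hmk (g e), (hg e he).2]
  have himg : ∑ e ∈ (policyGraph D).edgeSet.toFinset, w' (g e)
      = ∑ x ∈ ((policyGraph D).edgeSet.toFinset).image g, w' x :=
    (Finset.sum_image (fun x hx y hy hxy => by rw [← (hg x hx).2, ← (hg y hy).2, hxy])).symm
  rw [hsum, himg]
  apply Finset.sum_le_sum_of_subset_of_nonneg
  · intro x hx
    simp only [Finset.mem_image] at hx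
    obtain ⟨e, he, rfl⟩ := hx
    exact Multiset.mem_toFinset.2 (hg e he).1
  · exact fun x _ _ => hw' x


/-- DFMRF is a 2-approximation under 1-nearest-neighbor dependency: for points in general
position, the DFMRF energy (1-NNG forwarding energy plus MST aggregation energy) is at
most twice the optimal lossless fusion energy. -/
theorem stmt5 {ι : Type} [Fintype ι] [Nonempty ι]
    (p : ι → EuclideanSpace ℝ (Fin 2)) (hp : Function.Injective p)
    (hgen : ∀ i j k l : ι, i ≠ j → k ≠ l →
      dist (p i) (p j) = dist (p k) (p l) → (s(i, j) : Sym2 ι) = s(k, l))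
    (ν : ℝ) (hν : 0 < ν)
    (T : SimpleGraph ι) (hT : T.IsTree)
    (hmin : ∀ T' : SimpleGraph ι, T'.IsTree → graphEnergy p ν T ≤ graphEnergy p ν T') :
    graphEnergy p ν (nng p) + graphEnergy p ν T ≤ 2 * optEnergy p ν := by
  -- Every nearest-neighbor edge belongs to the minimum spanning tree T.
  have key1 : ∀ i j : ι, i ≠ j →
      (∀ l : ι, l ≠ i → dist (p i) (p j) ≤ dist (p i) (p l)) → T.Adj i j := by
    intro i j hij hnn
    by_contra hadj
    obtain ⟨w0⟩ := hT.isConnected.preconnected i j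
    obtain ⟨pw, hpw⟩ := w0.toPath
    cases pw with
    | nil => exact hij rfl
    | @cons _ x1 _ ha q =>
      rw [SimpleGraph.Walk.cons_isPath_iff] at hpw
      have hx1j : x1 ≠ j := fun h => hadj (h ▸ ha)
      have hx1i : x1 ≠ i := ha.ne'
      have hfe : s(i, j) ≠ s(i, x1) := fun h =>
        hx1j (Sym2.congr_right.mp h).symm
      have henq : s(i, x1) ∉ q.edges := fun h =>
        hpw.2 (q.fst_mem_support_of_mem_edges h)
      have hstrict : dist (p i) (p j) < dist (p i) (p x1) := by
        rcases (hnn x1 hx1i).lt_or_eq with h | h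
        · exact h
        · exact absurd (hgen i j i x1 hij ha.ne h) hfe
      set G' := (T.deleteEdges {s(i, x1)}) ⊔ SimpleGraph.fromEdgeSet {s(i, j)} with hG'def
      have hadjf : G'.Adj i j := Or.inr ⟨rfl, hij⟩
      have hconn' : G'.Connected := by
        apply aux_connected_of_reach hT.isConnected
        intro a b hab
        by_cases hcase : s(a, b) = s(i, x1)
        · have hwalk : G'.Walk j x1 := by
            refine (q.reverse.transfer G' ?_)
            intro e' he'
            rw [SimpleGraph.Walk.edges_reverse, List.mem_reverse] at he'
            apply SimpleGraph.edgeSet_mono (le_sup_left : T.deleteEdges {s(i, x1)} ≤ G')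
            rw [SimpleGraph.edgeSet_deleteEdges]
            exact ⟨q.edges_subset_edgeSet he', fun h => henq (h ▸ he')⟩
          have hreach : G'.Reachable i x1 := hadjf.reachable.trans ⟨hwalk⟩
          rw [Sym2.eq_iff] at hcase
          rcases hcase with ⟨rfl, rfl⟩ | ⟨rfl, rfl⟩
          · exact hreach
          · exact hreach.symm
        · refine SimpleGraph.Adj.reachable (Or.inl ?_)
          rw [SimpleGraph.deleteEdges_adj]
          exact ⟨hab, hcase⟩
      have hfNT : s(i, j) ∉ T.edgeSet := hadj
      have heT : s(i, x1) ∈ T.edgeSet := ha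
      have hEG' : graphEnergy p ν G'
          = graphEnergy p ν T - sym2Dist p ν s(i, x1) + sym2Dist p ν s(i, j) := by
        rw [graphEnergy_eq, graphEnergy_eq]
        have hfinset : G'.edgeSet.toFinset
            = insert (s(i, j)) ((T.edgeSet.toFinset).erase (s(i, x1))) := by
          ext e
          simp only [Set.mem_toFinset, hG'def, SimpleGraph.edgeSet_sup,
            SimpleGraph.edgeSet_deleteEdges, SimpleGraph.edgeSet_fromEdgeSet,
            Set.mem_union, Set.mem_diff, Set.mem_singleton_iff, Finset.mem_insert,
            Finset.mem_erase, Set.mem_setOf_eq]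
          constructor
          · rintro (⟨h1, h2⟩ | ⟨h1, _⟩)
            · exact Or.inr ⟨h2, h1⟩
            · exact Or.inl h1
          · rintro (rfl | ⟨h1, h2⟩)
            · exact Or.inr ⟨rfl, by simpa using hij⟩
            · exact Or.inl ⟨h2, h1⟩
        rw [hfinset, Finset.sum_insert (by
            simp only [Finset.mem_erase, Set.mem_toFinset]
            exact fun h => hfNT h.2),
            Finset.sum_erase_eq_sub (by simpa using heT)]
        ring
      obtain ⟨T'', hT'', hle⟩ :=
        aux_exists_spanning_tree G'.edgeSet.ncard G' le_rfl hconn'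
      have h1 := hmin T'' hT''
      have h2 := graphEnergy_mono p ν hle
      have hwlt : sym2Dist p ν s(i, j) < sym2Dist p ν s(i, x1) := by
        show dist (p i) (p j) ^ ν < dist (p i) (p x1) ^ ν
        exact Real.rpow_lt_rpow dist_nonneg hstrict hν
      rw [hEG'] at h2
      linarith
  -- nng ≤ T
  have hnngT : nng p ≤ T := by
    intro a b hab
    obtain ⟨hne, h | h⟩ := hab
    · exact key1 a b hne h
    · exact (key1 b a hne.symm h).symm
  have key2 : graphEnergy p ν (nng p) ≤ graphEnergy p ν T := graphEnergy_mono p ν hnngT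
  -- T's energy lower-bounds the optimal energy
  have key3 : graphEnergy p ν T ≤ optEnergy p ν := by
    apply le_csInf
    · refine ⟨policyCost p ν (Finset.univ ×ˢ Finset.univ : Finset (ι × ι)).val,
        (Finset.univ ×ˢ Finset.univ : Finset (ι × ι)).val, ?_, rfl⟩
      have : policyGraph (Finset.univ ×ˢ Finset.univ : Finset (ι × ι)).val
          = (⊤ : SimpleGraph ι) := by
        ext a b
        simp [policyGraph, SimpleGraph.fromRel_adj]
      rw [this]
      exact SimpleGraph.connected_top
    · rintro c ⟨D, hD, rfl⟩
      obtain ⟨T'', hT'', hle⟩ :=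
        aux_exists_spanning_tree (policyGraph D).edgeSet.ncard (policyGraph D) le_rfl hD
      calc graphEnergy p ν T ≤ graphEnergy p ν T'' := hmin T'' hT''
        _ ≤ graphEnergy p ν (policyGraph D) := graphEnergy_mono p ν hle
        _ ≤ policyCost p ν D := graphEnergy_le_policyCost p ν D
  linarith
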